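/- arXiv:math/9903103 — 4 statements merged into one kernel-verified Lean document; each statement's English description precedes it below -/
import Mathlib

section
/- Let μ be Lebesgue measure on [0,1] and define f : [0,1] → L∞[0,1] by f(s) = the equivalence class of the characteristic function χ_{[s,1]}. Then for every Borel set A ⊆ [0,1], f is RL-integrable over A and its RL integral over A is the element of L∞[0,1] represented by the function t ↦ μ(A ∩ [0,t]). -/
open MeasureTheory Set Pointwise

/-- A countable partition of `A` into pairwise disjoint measurable pieces
(possibly empty, so that finite partitions are included). -/
def IsRLPartition {Ω : Type*} [MeasurableSpace Ω] (A : Set Ω) (P : ℕ → Set Ω) : Prop :=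
  (∀ i, MeasurableSet (P i)) ∧ Pairwise (Function.onFun Disjoint P) ∧ (⋃ i, P i) = A

/-- `Γ` is finer than (inscribed into) `P`: every piece of `Γ` is contained in a piece of `P`. -/
def IsFinerPartition {Ω : Type*} (Γ P : ℕ → Set Ω) : Prop :=
  ∀ j, ∃ i, Γ j ⊆ P i

/-- `T` is a choice of sampling points for the partition `P`. -/
def IsSampling {Ω : Type*} (P : ℕ → Set Ω) (T : ℕ → Ω) : Prop :=
  ∀ i, (P i).Nonempty → T i ∈ P i

/-- The RL integral sum `S(f, P, T) = ∑ᵢ μ(Pᵢ) • f(Tᵢ)`. -/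
noncomputable def RLSum {Ω X : Type*} [MeasurableSpace Ω] [NormedAddCommGroup X]
    [NormedSpace ℝ X] (μ : Measure Ω) (f : Ω → X) (P : ℕ → Set Ω) (T : ℕ → Ω) : X :=
  ∑' i, (μ (P i)).toReal • f (T i)

/-- Absolute convergence of the RL integral sum. -/
def RLSumAbsConv {Ω X : Type*} [MeasurableSpace Ω] [NormedAddCommGroup X]
    (μ : Measure Ω) (f : Ω → X) (P : ℕ → Set Ω) (T : ℕ → Ω) : Prop :=
  Summable fun i => (μ (P i)).toReal * ‖f (T i)‖

/-- `f` is RL-integrable over `A` with RL integral `x`. -/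
def HasRLIntegral {Ω X : Type*} [MeasurableSpace Ω] [NormedAddCommGroup X] [NormedSpace ℝ X]
    (μ : Measure Ω) (f : Ω → X) (A : Set Ω) (x : X) : Prop :=
  ∀ ε > 0, ∃ P : ℕ → Set Ω, IsRLPartition A P ∧
    ∀ Γ : ℕ → Set Ω, IsRLPartition A Γ → IsFinerPartition Γ P →
      ∀ T : ℕ → Ω, IsSampling Γ T →
        RLSumAbsConv μ f Γ T ∧ ‖RLSum μ f Γ T - x‖ < ε

/-- `f` has a Lebesgue-integrable majorant, i.e. `f ∈ L̄₁(Ω, Σ, μ, X)`. -/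
def HasIntegrableMajorant {Ω X : Type*} [MeasurableSpace Ω] [NormedAddCommGroup X]
    (μ : Measure Ω) (f : Ω → X) : Prop :=
  ∃ g : Ω → ℝ, Integrable g μ ∧ ∀ t, ‖f t‖ ≤ g t

/-- The limit set `I(f)`: all limit points of the net of absolute RL integral sums. -/
def RLLimitSet {Ω X : Type*} [MeasurableSpace Ω] [NormedAddCommGroup X] [NormedSpace ℝ X]
    (μ : Measure Ω) (f : Ω → X) : Set X :=
  {x | ∀ ε > 0, ∀ P : ℕ → Set Ω, IsRLPartition Set.univ P →
    ∃ Γ : ℕ → Set Ω, IsRLPartition Set.univ Γ ∧ IsFinerPartition Γ P ∧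
      ∃ T : ℕ → Ω, IsSampling Γ T ∧ RLSumAbsConv μ f Γ T ∧ ‖RLSum μ f Γ T - x‖ < ε}

/-- `g` is a Bochner-integrable equivalent of `f`: `g` is Bochner integrable and the
RL integral of `f` over every measurable set equals the Bochner integral of `g` over it. -/
def BochnerEquivalent {Ω X : Type*} [MeasurableSpace Ω] [NormedAddCommGroup X] [NormedSpace ℝ X]
    (μ : Measure Ω) (f g : Ω → X) : Prop :=
  Integrable g μ ∧ ∀ A : Set Ω, MeasurableSet A → HasRLIntegral μ f A (∫ ω in A, g ω ∂μ)

/-- `f : [0,1] → X` is Riemann integrable with Riemann integral `x`. -/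
def HasRiemannIntegral {X : Type*} [NormedAddCommGroup X] [NormedSpace ℝ X]
    (f : ℝ → X) (x : X) : Prop :=
  ∀ ε > 0, ∃ δ > 0, ∀ (n : ℕ) (a : ℕ → ℝ) (t : ℕ → ℝ),
    a 0 = 0 → a n = 1 → (∀ i < n, a i ≤ a (i + 1)) →
    (∀ i < n, a (i + 1) - a i < δ) →
    (∀ i < n, t i ∈ Set.Icc (a i) (a (i + 1))) →
    ‖(∑ i ∈ Finset.range n, (a (i + 1) - a i) • f (t i)) - x‖ < ε

/-- Lebesgue measure on `[0,1]`. -/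
noncomputable abbrev leb01 : Measure ℝ := volume.restrict (Set.Icc (0:ℝ) 1)

/-- The function `f : [0,1] → L∞[0,1]`, `f s = χ_{[s,1]}` (as an element of `L∞`). -/
noncomputable def stepFn (s : ℝ) : Lp ℝ ⊤ leb01 :=
  MemLp.toLp ((Set.Icc s 1).indicator fun _ => (1:ℝ))
    (memLp_top_of_bound
      ((measurable_const.indicator measurableSet_Icc).aestronglyMeasurable) 1
      (Filter.Eventually.of_forall fun t => by
        by_cases h : t ∈ Set.Icc s 1 <;> simp [Set.indicator_apply, h]))


section StepFnProof

open Filter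

private lemma coeFn_stepFn (s : ℝ) :
    ⇑(stepFn s) =ᵐ[leb01] (Set.Icc s 1).indicator (fun _ => (1:ℝ)) :=
  MemLp.coeFn_toLp _

private lemma norm_stepFn_le (s : ℝ) : ‖stepFn s‖ ≤ 1 := by
  have h := Lp.norm_le_of_ae_bound (f := stepFn s) (C := 1) zero_le_one ?_
  · simpa using h
  · filter_upwards [coeFn_stepFn s] with t ht
    rw [ht]
    by_cases h : t ∈ Set.Icc s 1 <;> simp [Set.indicator_apply, h]

private lemma Lp_coeFn_finsum (F : ℕ → Lp ℝ ⊤ leb01) (N : ℕ) :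
    ∀ᵐ t ∂leb01, (↑↑(∑ j ∈ Finset.range N, F j) : ℝ → ℝ) t
      = ∑ j ∈ Finset.range N, F j t := by
  induction N with
  | zero => filter_upwards [Lp.coeFn_zero ℝ ⊤ leb01] with t h; simpa using h
  | succ n ih =>
    filter_upwards [ih, Lp.coeFn_add (∑ j ∈ Finset.range n, F j) (F n)] with t h1 h2
    rw [Finset.sum_range_succ, Finset.sum_range_succ, h2, Pi.add_apply, h1]

end StepFnProof

set_option maxHeartbeats 2000000 in
private lemma stepFn_main (A : Set ℝ) (hA : MeasurableSet A) (hA1 : A ⊆ Set.Icc (0:ℝ) 1) :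
    ∃ x : Lp ℝ ⊤ leb01, HasRLIntegral leb01 stepFn A x ∧
      ⇑x =ᵐ[leb01] fun t => (volume (A ∩ Set.Icc (0:ℝ) t)).toReal := by
  classical
  set g : ℝ → ℝ := fun t => (volume (A ∩ Set.Icc (0:ℝ) t)).toReal with hg_def
  -- g in terms of leb01
  have hAsub : ∀ t : ℝ, A ∩ Set.Icc 0 t ⊆ Set.Icc (0:ℝ) 1 :=
    fun t => Set.inter_subset_left.trans hA1
  have hg_eq : ∀ t : ℝ, g t = (leb01 (A ∩ Set.Icc 0 t)).toReal := by
    intro t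
    have : leb01 (A ∩ Set.Icc 0 t) = volume (A ∩ Set.Icc 0 t) := by
      rw [Measure.restrict_apply (hA.inter measurableSet_Icc),
        Set.inter_eq_self_of_subset_left (hAsub t)]
    rw [this]
  have hg_mono : Monotone g := by
    intro s t hst
    have h1 : volume (A ∩ Set.Icc 0 s) ≤ volume (A ∩ Set.Icc 0 t) :=
      measure_mono (Set.inter_subset_inter_right _ (Set.Icc_subset_Icc_right hst))
    exact ENNReal.toReal_mono
      ((measure_mono (hAsub t)).trans_lt (by simp [Real.volume_Icc])).ne h1
  have hg_bd : ∀ t : ℝ, ‖g t‖ ≤ 1 := by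
    intro t
    have h1 : volume (A ∩ Set.Icc 0 t) ≤ volume (Set.Icc (0:ℝ) 1) := measure_mono (hAsub t)
    rw [Real.volume_Icc] at h1
    have h2 : g t ≤ 1 := by
      have := ENNReal.toReal_mono (by simp) h1
      simpa using this
    rw [Real.norm_eq_abs, abs_of_nonneg ENNReal.toReal_nonneg]
    exact h2
  have hgmem : MemLp g ⊤ leb01 :=
    memLp_top_of_bound (hg_mono.measurable).aestronglyMeasurable 1
      (Filter.Eventually.of_forall hg_bd)
  refine ⟨hgmem.toLp g, ?_, hgmem.coeFn_toLp⟩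
  intro ε hε
  -- choose n
  obtain ⟨n, hn4⟩ := exists_nat_gt (4 / ε)
  have hnpos : (0:ℝ) < n := lt_of_le_of_lt (by positivity) hn4
  have h2n : 2 / (n:ℝ) < ε / 2 := by
    rw [div_lt_div_iff₀ hnpos two_pos]
    have := (div_lt_iff₀ hε).mp hn4
    nlinarith
  have hinv_nonneg : (0:ℝ) ≤ 1 / n := by positivity
  -- the partition P
  set P : ℕ → Set ℝ := fun k => A ∩ Set.Ico ((k:ℝ)/n) (((k:ℝ)+1)/n) with hP_def
  have hP_disj : ∀ k l : ℕ, k < l → Disjoint (P k) (P l) := by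
    intro k l hkl
    rw [Set.disjoint_left]
    rintro x ⟨-, -, hk2⟩ ⟨-, hl1, -⟩
    have h1 : ((k:ℝ)+1)/n ≤ (l:ℝ)/n := by
      gcongr
      exact_mod_cast Nat.succ_le_of_lt hkl
    linarith
  have hP : IsRLPartition A P := by
    refine ⟨fun k => hA.inter measurableSet_Ico, ?_, ?_⟩
    · intro k l hkl
      rcases hkl.lt_or_gt with h | h
      · exact hP_disj k l h
      · exact (hP_disj l k h).symm
    · ext x
      simp only [Set.mem_iUnion, hP_def, Set.mem_inter_iff, Set.mem_Ico]
      constructor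
      · rintro ⟨k, hx, -⟩; exact hx
      · intro hx
        have hx0 : (0:ℝ) ≤ x := (hA1 hx).1
        refine ⟨⌊x * n⌋₊, hx, ?_, ?_⟩
        · rw [div_le_iff₀ hnpos]
          exact Nat.floor_le (by positivity)
        · rw [lt_div_iff₀ hnpos]
          exact_mod_cast Nat.lt_floor_add_one (x * n)
  refine ⟨P, hP, ?_⟩
  intro Γ hΓ hfine T hT
  obtain ⟨hΓm, hΓd, hΓu⟩ := hΓ
  set c : ℕ → ℝ := fun j => (leb01 (Γ j)).toReal with hc_def
  have hc0 : ∀ j, 0 ≤ c j := fun j => ENNReal.toReal_nonneg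
  have hΓfin : ∀ j, leb01 (Γ j) ≠ ⊤ := fun j => measure_ne_top _ _
  have htsum : ∑' j, leb01 (Γ j) = leb01 A := by
    rw [← measure_iUnion hΓd hΓm, hΓu]
  have hc_sum : Summable c :=
    ENNReal.summable_toReal (by rw [htsum]; exact measure_ne_top _ _)
  have hΓA : ∀ j, Γ j ⊆ A := by
    intro j
    rw [← hΓu]
    exact Set.subset_iUnion Γ j
  -- absolute convergence
  have habs : RLSumAbsConv leb01 stepFn Γ T := by
    refine Summable.of_nonneg_of_le (fun j => by positivity) (fun j => ?_) hc_sum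
    calc c j * ‖stepFn (T j)‖ ≤ c j * 1 :=
          mul_le_mul_of_nonneg_left (norm_stepFn_le _) (hc0 j)
      _ = c j := mul_one _
  refine ⟨habs, ?_⟩
  -- the Lp-valued series
  set F : ℕ → Lp ℝ ⊤ leb01 := fun j => c j • stepFn (T j) with hF_def
  have hFnorm : ∀ j, ‖F j‖ ≤ c j := by
    intro j
    rw [hF_def, norm_smul, Real.norm_eq_abs, abs_of_nonneg (hc0 j)]
    calc c j * ‖stepFn (T j)‖ ≤ c j * 1 :=
          mul_le_mul_of_nonneg_left (norm_stepFn_le _) (hc0 j)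
      _ = c j := mul_one _
  have hFsummable : Summable F :=
    Summable.of_norm (Summable.of_nonneg_of_le (fun j => norm_nonneg _) hFnorm hc_sum)
  -- choose N with small tail
  have htail : Filter.Tendsto (fun N => ∑' i, c (i + N)) Filter.atTop (nhds 0) :=
    tendsto_sum_nat_add c
  obtain ⟨N, hN⟩ := (htail.eventually (gt_mem_nhds (by positivity : (0:ℝ) < ε/8))).exists
  have hcshift : ∀ M : ℕ, Summable fun i => c (i + M) :=
    fun M => (summable_nat_add_iff M).mpr hc_sum
  have htail_nonneg : (0:ℝ) ≤ ∑' i, c (i + N) := tsum_nonneg fun i => hc0 _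
  set SN : Lp ℝ ⊤ leb01 := ∑ j ∈ Finset.range N, F j with hSN_def
  -- a.e. pointwise description of SN
  have hjall : ∀ᵐ t ∂leb01, ∀ j, (↑↑(F j) : ℝ → ℝ) t
      = c j * (Set.Icc (T j) 1).indicator (fun _ => (1:ℝ)) t := by
    rw [MeasureTheory.ae_all_iff]
    intro j
    filter_upwards [Lp.coeFn_smul (c j) (stepFn (T j)), coeFn_stepFn (T j)] with t h1 h2
    rw [show F j = c j • stepFn (T j) from rfl, h1, Pi.smul_apply, h2, smul_eq_mul]
  -- the key a.e. bound for ‖SN - x‖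
  have hae : ∀ᵐ t ∂leb01, ‖(↑↑(SN - hgmem.toLp g) : ℝ → ℝ) t‖ ≤ ∑' i, c (i + N) + 2 / n := by
    filter_upwards [Lp.coeFn_sub SN (hgmem.toLp g), hgmem.coeFn_toLp,
      Lp_coeFn_finsum F N, hjall, ae_restrict_mem measurableSet_Icc] with t hsub hxg hsumN hj ht
    rw [hsub, Pi.sub_apply, hxg, hsumN]
    set J : Set ℕ := {j | T j ≤ t} with hJ_def
    set d : ℕ → ℝ := J.indicator c with hd_def
    have hd0 : ∀ j, 0 ≤ d j := fun j => Set.indicator_apply_nonneg fun _ => hc0 j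
    have hdc : ∀ j, d j ≤ c j := by
      intro j
      rw [hd_def]
      by_cases h : j ∈ J <;> simp [Set.indicator_apply, h, hc0 j]
    have hd_sum : Summable d := Summable.of_nonneg_of_le hd0 hdc hc_sum
    -- SN t as a finite sum of d
    have hSNt : ∑ j ∈ Finset.range N, (↑↑(F j) : ℝ → ℝ) t = ∑ j ∈ Finset.range N, d j := by
      refine Finset.sum_congr rfl fun j _ => ?_
      rw [hj j, hd_def]
      by_cases h : T j ≤ t
      · have hmem : t ∈ Set.Icc (T j) 1 := ⟨h, ht.2⟩
        simp [Set.indicator_apply, hmem, hJ_def, h]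
      · have hmem : t ∉ Set.Icc (T j) 1 := fun hc => h hc.1
        simp [Set.indicator_apply, hmem, hJ_def, h]
    rw [hSNt]
    -- the full sum of d equals the measure of U
    set U : Set ℝ := ⋃ j ∈ J, Γ j with hU_def
    have hdU : ∑' j, d j = (leb01 U).toReal := by
      rw [hd_def, ← tsum_subtype J c, hU_def,
        measure_biUnion (Set.to_countable J) (hΓd.set_pairwise J) (fun j _ => hΓm j),
        ENNReal.tsum_toReal_eq (fun (j : J) => hΓfin j)]
    -- inclusions
    have hUsub : U ⊆ A ∩ Set.Icc 0 (t + 1/n) := by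
      rintro y hy
      rw [hU_def, Set.mem_iUnion₂] at hy
      obtain ⟨j, hjJ, hyΓ⟩ := hy
      have hyA : y ∈ A := hΓA j hyΓ
      obtain ⟨i, hsub⟩ := hfine j
      have hTj : T j ∈ Γ j := hT j ⟨y, hyΓ⟩
      have h1 := hsub hyΓ
      have h2 := hsub hTj
      rw [hP_def] at h1 h2
      have hy2 : y < ((i:ℝ)+1)/n := h1.2.2
      have hT1 : ((i:ℝ))/n ≤ T j := h2.2.1
      have hTt : T j ≤ t := hjJ
      refine ⟨hyA, (hA1 hyA).1, ?_⟩
      have : ((i:ℝ)+1)/n = (i:ℝ)/n + 1/n := by ring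
      nlinarith [this ▸ hy2]
    have hsubU : A ∩ Set.Icc 0 (t - 1/n) ⊆ U := by
      rintro y ⟨hyA, hy0, hyle⟩
      have : y ∈ ⋃ j, Γ j := hΓu ▸ hyA
      obtain ⟨j, hyΓ⟩ := Set.mem_iUnion.mp this
      obtain ⟨i, hsub⟩ := hfine j
      have hTj : T j ∈ Γ j := hT j ⟨y, hyΓ⟩
      have h1 := hsub hyΓ
      have h2 := hsub hTj
      rw [hP_def] at h1 h2
      have hTjt : T j ≤ t := by
        have hy1 : (i:ℝ)/n ≤ y := h1.2.1
        have hT2 : T j < ((i:ℝ)+1)/n := h2.2.2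
        have : ((i:ℝ)+1)/n = (i:ℝ)/n + 1/n := by ring
        nlinarith [this ▸ hT2]
      exact Set.mem_biUnion (show j ∈ J from hTjt) hyΓ
    -- measure comparison
    have hUm : MeasurableSet U := MeasurableSet.biUnion (Set.to_countable J) (fun j _ => hΓm j)
    have hfinU : leb01 U ≠ ⊤ := measure_ne_top _ _
    have hlo_le_m : (leb01 (A ∩ Set.Icc 0 (t - 1/n))).toReal ≤ (leb01 U).toReal :=
      ENNReal.toReal_mono hfinU (measure_mono hsubU)
    have hm_le_hi : (leb01 U).toReal ≤ (leb01 (A ∩ Set.Icc 0 (t + 1/n))).toReal :=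
      ENNReal.toReal_mono (measure_ne_top _ _) (measure_mono hUsub)
    have hlo_le_g : (leb01 (A ∩ Set.Icc 0 (t - 1/n))).toReal ≤ g t := by
      rw [hg_eq t]
      exact ENNReal.toReal_mono (measure_ne_top _ _)
        (measure_mono (Set.inter_subset_inter_right _ (Set.Icc_subset_Icc_right (by linarith))))
    have hg_le_hi : g t ≤ (leb01 (A ∩ Set.Icc 0 (t + 1/n))).toReal := by
      rw [hg_eq t]
      exact ENNReal.toReal_mono (measure_ne_top _ _)
        (measure_mono (Set.inter_subset_inter_right _ (Set.Icc_subset_Icc_right (by linarith))))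
    have hhi_lo : (leb01 (A ∩ Set.Icc 0 (t + 1/n))).toReal
        ≤ (leb01 (A ∩ Set.Icc 0 (t - 1/n))).toReal + 2/n := by
      have hincl : A ∩ Set.Icc 0 (t + 1/n)
          ⊆ (A ∩ Set.Icc 0 (t - 1/n)) ∪ Set.Ioc (t - 1/n) (t + 1/n) := by
        rintro y ⟨hyA, hy0, hyle⟩
        by_cases h : y ≤ t - 1/n
        · exact Or.inl ⟨hyA, hy0, h⟩
        · exact Or.inr ⟨lt_of_not_ge h, hyle⟩
      have h1 : leb01 (A ∩ Set.Icc 0 (t + 1/n))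
          ≤ leb01 (A ∩ Set.Icc 0 (t - 1/n)) + leb01 (Set.Ioc (t - 1/n) (t + 1/n)) :=
        (measure_mono hincl).trans (measure_union_le _ _)
      have h2 : leb01 (Set.Ioc (t - 1/n) (t + 1/n)) ≤ ENNReal.ofReal (2/n) := by
        rw [Measure.restrict_apply measurableSet_Ioc]
        refine (measure_mono Set.inter_subset_left).trans ?_
        rw [Real.volume_Ioc]
        exact ENNReal.ofReal_le_ofReal (by ring_nf; linarith)
      have h3 : leb01 (A ∩ Set.Icc 0 (t + 1/n))
          ≤ leb01 (A ∩ Set.Icc 0 (t - 1/n)) + ENNReal.ofReal (2/n) :=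
        h1.trans (add_le_add (le_refl _) h2)
      have h4 := ENNReal.toReal_mono
        (by exact ENNReal.add_ne_top.mpr ⟨measure_ne_top _ _, ENNReal.ofReal_ne_top⟩) h3
      rw [ENNReal.toReal_add (measure_ne_top _ _) ENNReal.ofReal_ne_top,
        ENNReal.toReal_ofReal (by positivity)] at h4
      exact h4
    -- partial sum vs full sum of d
    have hpartial : ∑ j ∈ Finset.range N, d j + ∑' i, d (i + N) = ∑' j, d j :=
      Summable.sum_add_tsum_nat_add N hd_sum
    have htail_d : ∑' i, d (i + N) ≤ ∑' i, c (i + N) :=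
      Summable.tsum_le_tsum (fun i => hdc _) ((summable_nat_add_iff N).mpr hd_sum) (hcshift N)
    have htail_d0 : 0 ≤ ∑' i, d (i + N) := tsum_nonneg fun i => hd0 _
    -- combine
    have habs1 : |∑' j, d j - g t| ≤ 2/n := by
      rw [hdU]
      rw [abs_le]
      constructor <;> linarith
    rw [Real.norm_eq_abs]
    calc |∑ j ∈ Finset.range N, d j - g t|
        ≤ |∑ j ∈ Finset.range N, d j - ∑' j, d j| + |∑' j, d j - g t| := abs_sub_le _ _ _
      _ ≤ ∑' i, c (i + N) + 2/n := by
          refine add_le_add ?_ habs1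
          rw [← hpartial]
          rw [abs_le]
          constructor <;> [linarith; linarith]
  have hSNx : ‖SN - hgmem.toLp g‖ ≤ ∑' i, c (i + N) + 2/n := by
    have h := Lp.norm_le_of_ae_bound (f := SN - hgmem.toLp g)
      (C := ∑' i, c (i + N) + 2/n) (by positivity) hae
    simpa using h
  -- tail of the Lp series
  have hRL : RLSum leb01 stepFn Γ T = ∑' j, F j := by
    simp only [RLSum, hF_def, hc_def]
  have hSdiff : RLSum leb01 stepFn Γ T - SN = ∑' i, F (i + N) := by
    rw [hRL, hSN_def, eq_comm, eq_sub_iff_add_eq, add_comm]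
    exact Summable.sum_add_tsum_nat_add N hFsummable
  have hFnormsum : Summable fun i => ‖F (i + N)‖ :=
    (summable_nat_add_iff N).mpr
      (Summable.of_nonneg_of_le (fun j => norm_nonneg _) hFnorm hc_sum)
  have hSdiff_norm : ‖RLSum leb01 stepFn Γ T - SN‖ ≤ ∑' i, c (i + N) := by
    rw [hSdiff]
    exact (norm_tsum_le_tsum_norm hFnormsum).trans
      (Summable.tsum_le_tsum (fun i => hFnorm _) hFnormsum (hcshift N))
  calc ‖RLSum leb01 stepFn Γ T - hgmem.toLp g‖
      = ‖(RLSum leb01 stepFn Γ T - SN) + (SN - hgmem.toLp g)‖ := by rw [sub_add_sub_cancel]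
    _ ≤ ‖RLSum leb01 stepFn Γ T - SN‖ + ‖SN - hgmem.toLp g‖ := norm_add_le _ _
    _ ≤ ∑' i, c (i + N) + (∑' i, c (i + N) + 2/n) := add_le_add hSdiff_norm hSNx
    _ < ε := by linarith

/-- For every Borel set `A ⊆ [0,1]`, the function `s ↦ χ_{[s,1]}` is
RL-integrable over `A` (w.r.t. Lebesgue measure on `[0,1]`), and its RL integral over `A`
is the element of `L∞[0,1]` represented by `t ↦ μ(A ∩ [0,t])`. -/
theorem stepFn_hasRLIntegral (A : Set ℝ) (hA : MeasurableSet A) (hA1 : A ⊆ Set.Icc (0:ℝ) 1) :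
    ∃ x : Lp ℝ ⊤ leb01, HasRLIntegral leb01 stepFn A x ∧
      ⇑x =ᵐ[leb01] fun t => (volume (A ∩ Set.Icc (0:ℝ) t)).toReal := by
  exact stepFn_main A hA hA1
end

section
/- Let μ be Lebesgue measure on [0,1]. There is no Bochner-integrable function g : [0,1] → L∞[0,1] such that for every Borel set A ⊆ [0,1], the Bochner integral (Bochner)∫_A g dμ equals the element of L∞[0,1] represented by the function t ↦ μ(A ∩ [0,t]). -/
open MeasureTheory Set Pointwise

section BochnerAuxNS
open MeasureTheory Set ENNReal


lemma lp_int' (f : Lp ℝ ⊤ leb01) : Integrable f leb01 := (Lp.memLp f).integrable le_top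

lemma lp_ae_bdd' (f : Lp ℝ ⊤ leb01) : ∀ᵐ t ∂leb01, ‖f t‖ ≤ ‖f‖ := by
  filter_upwards [enorm_ae_le_eLpNormEssSup (f : ℝ → ℝ) leb01] with t ht
  have h2 : eLpNormEssSup (f : ℝ → ℝ) leb01 ≠ ⊤ := by
    rw [← eLpNorm_exponent_top]; exact Lp.eLpNorm_ne_top f
  have := ENNReal.toReal_mono h2 ht
  simpa [Lp.norm_def, eLpNorm_exponent_top] using this

noncomputable def evalCLM' (p q : ℝ) : Lp ℝ ⊤ leb01 →L[ℝ] ℝ :=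
  LinearMap.mkContinuous
    { toFun := fun f => ∫ t in Set.Icc p q, f t ∂leb01
      map_add' := fun f g => by
        show (∫ t in Set.Icc p q, (⇑(f + g)) t ∂leb01) = _
        have h1 : ∫ t in Set.Icc p q, (⇑(f + g)) t ∂leb01
            = ∫ t in Set.Icc p q, (f t + g t) ∂leb01 :=
          integral_congr_ae (ae_restrict_of_ae (Lp.coeFn_add f g))
        rw [h1, integral_add ((lp_int' f).restrict) ((lp_int' g).restrict)]
      map_smul' := fun c f => by
        show (∫ t in Set.Icc p q, (⇑(c • f)) t ∂leb01) = _
        have h1 : ∫ t in Set.Icc p q, (⇑(c • f)) t ∂leb01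
            = ∫ t in Set.Icc p q, c • (f t) ∂leb01 :=
          integral_congr_ae (ae_restrict_of_ae (Lp.coeFn_smul c f))
        rw [h1, integral_smul]; rfl }
    ((leb01 (Set.Icc p q)).toReal)
    (fun f => by
      have hb : ∀ᵐ t ∂leb01.restrict (Set.Icc p q), ‖f t‖ ≤ ‖f‖ :=
        ae_restrict_of_ae (lp_ae_bdd' f)
      have := norm_setIntegral_le_of_norm_le_const_ae
        (show leb01 (Set.Icc p q) < ⊤ from lt_of_le_of_lt (measure_mono (subset_univ _))
          (measure_lt_top _ _)) hb
      simpa [mul_comm, Measure.real] using this)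

lemma evalCLM'_apply (p q : ℝ) (f : Lp ℝ ⊤ leb01) :
    evalCLM' p q f = ∫ t in Set.Icc p q, f t ∂leb01 := rfl

lemma evalCLM'_bound (p q : ℝ) (f : Lp ℝ ⊤ leb01) :
    ‖evalCLM' p q f‖ ≤ (leb01 (Set.Icc p q)).toReal * ‖f‖ := by
  rw [evalCLM'_apply]
  have hb : ∀ᵐ t ∂leb01.restrict (Set.Icc p q), ‖f t‖ ≤ ‖f‖ :=
    ae_restrict_of_ae (lp_ae_bdd' f)
  have := norm_setIntegral_le_of_norm_le_const_ae
    (show leb01 (Set.Icc p q) < ⊤ from lt_of_le_of_lt (measure_mono (subset_univ _))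
      (measure_lt_top _ _)) hb
  simpa [mul_comm, Measure.real] using this

lemma fubini_key' {A : Set ℝ} (hA : MeasurableSet A) (hA1 : A ⊆ Set.Icc 0 1) (p q : ℝ) :
    ∫⁻ t in Set.Icc p q, volume (A ∩ Set.Icc 0 t) ∂volume
      = ∫⁻ s in A, volume (Set.Icc p q ∩ Set.Ici s) ∂volume := by
  have h1 : ∀ t : ℝ, volume (A ∩ Set.Icc 0 t)
      = ∫⁻ s in A, (if s ≤ t then (1:ℝ≥0∞) else 0) ∂volume := by
    intro t
    have : (fun s : ℝ => if s ≤ t then (1:ℝ≥0∞) else 0)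
        = (Set.Iic t).indicator (fun _ => 1) := by
      ext s; simp [Set.indicator_apply]
    rw [this, lintegral_indicator measurableSet_Iic, setLIntegral_one,
      Measure.restrict_apply measurableSet_Iic]
    congr 1
    ext x
    constructor
    · rintro ⟨hx1, _, hx2⟩; exact ⟨hx2, hx1⟩
    · rintro ⟨hx1, hx2⟩; exact ⟨hx2, (hA1 hx2).1, hx1⟩
  have h2 : ∀ s : ℝ, volume (Set.Icc p q ∩ Set.Ici s)
      = ∫⁻ t in Set.Icc p q, (if s ≤ t then (1:ℝ≥0∞) else 0) ∂volume := by
    intro s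
    have : (fun t : ℝ => if s ≤ t then (1:ℝ≥0∞) else 0)
        = (Set.Ici s).indicator (fun _ => 1) := by
      ext t; simp [Set.indicator_apply]
    rw [this, lintegral_indicator measurableSet_Ici, setLIntegral_one,
      Measure.restrict_apply measurableSet_Ici, Set.inter_comm]
  simp only [h1]
  rw [lintegral_lintegral_swap]
  · exact lintegral_congr fun s => (h2 s).symm
  · exact (Measurable.ite (measurableSet_le measurable_snd measurable_fst)
      measurable_const measurable_const).aemeasurable

lemma leb01_restrict' {A : Set ℝ} (hA : MeasurableSet A) (hA1 : A ⊆ Set.Icc 0 1) :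
    leb01.restrict A = volume.restrict A := by
  rw [Measure.restrict_restrict hA, Set.inter_eq_left.mpr hA1]

lemma leb01_restrict_inter' {A : Set ℝ} (hA : MeasurableSet A) :
    leb01.restrict A = leb01.restrict (A ∩ Set.Icc 0 1) := by
  rw [Measure.restrict_restrict hA, Measure.restrict_restrict (hA.inter measurableSet_Icc),
    Set.inter_assoc, Set.inter_self]

lemma key_real' {A : Set ℝ} (hA : MeasurableSet A) (hA1 : A ⊆ Set.Icc 0 1) {p q : ℝ}
    (hp : 0 ≤ p) (hq : q ≤ 1) :
    ∫ t in Set.Icc p q, (volume (A ∩ Set.Icc 0 t)).toReal ∂leb01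
      = ∫ s in A, (volume (Set.Icc p q ∩ Set.Ici s)).toReal ∂leb01 := by
  have hpq : Set.Icc p q ⊆ Set.Icc (0:ℝ) 1 := Set.Icc_subset_Icc hp hq
  rw [show (∫ t in Set.Icc p q, (volume (A ∩ Set.Icc 0 t)).toReal ∂leb01)
      = ∫ t in Set.Icc p q, (volume (A ∩ Set.Icc 0 t)).toReal ∂volume by
    rw [← leb01_restrict' measurableSet_Icc hpq]]
  rw [show (∫ s in A, (volume (Set.Icc p q ∩ Set.Ici s)).toReal ∂leb01)
      = ∫ s in A, (volume (Set.Icc p q ∩ Set.Ici s)).toReal ∂volume by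
    rw [← leb01_restrict' hA hA1]]
  have hm1 : Monotone fun t : ℝ => volume (A ∩ Set.Icc 0 t) := fun a b hab =>
    measure_mono (Set.inter_subset_inter_right _ (Set.Icc_subset_Icc le_rfl hab))
  have hm2 : Antitone fun s : ℝ => volume (Set.Icc p q ∩ Set.Ici s) := fun a b hab =>
    measure_mono (Set.inter_subset_inter_right _ (Set.Ici_subset_Ici.mpr hab))
  rw [integral_toReal (hm1.measurable.aemeasurable) (ae_of_all _ fun t =>
      lt_of_le_of_lt (measure_mono Set.inter_subset_right) measure_Icc_lt_top),
    integral_toReal (hm2.measurable.aemeasurable) (ae_of_all _ fun s =>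
      lt_of_le_of_lt (measure_mono Set.inter_subset_left) measure_Icc_lt_top),
    fubini_key' hA hA1 p q]

lemma w_integrable (p q : ℝ) :
    Integrable (fun s => (volume (Set.Icc p q ∩ Set.Ici s)).toReal) leb01 := by
  have hm2 : Antitone fun s : ℝ => volume (Set.Icc p q ∩ Set.Ici s) := fun a b hab =>
    measure_mono (Set.inter_subset_inter_right _ (Set.Ici_subset_Ici.mpr hab))
  refine (integrable_const ((volume (Set.Icc p q)).toReal)).mono'
    (hm2.measurable.ennreal_toReal).aestronglyMeasurable (ae_of_all _ fun s => ?_)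
  rw [Real.norm_of_nonneg ENNReal.toReal_nonneg]
  exact ENNReal.toReal_mono measure_Icc_lt_top.ne (measure_mono Set.inter_subset_left)

lemma ae_eval (g : ℝ → Lp ℝ ⊤ leb01) (hg : Integrable g leb01)
    (hrep : ∀ A : Set ℝ, MeasurableSet A → A ⊆ Set.Icc (0:ℝ) 1 →
      ⇑(∫ s in A, g s ∂leb01) =ᵐ[leb01] fun t => (volume (A ∩ Set.Icc (0:ℝ) t)).toReal)
    {p q : ℝ} (hp : 0 ≤ p) (hq : q ≤ 1) :
    ∀ᵐ s ∂leb01, evalCLM' p q (g s) = (volume (Set.Icc p q ∩ Set.Ici s)).toReal := by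
  have hint1 : Integrable (fun s => evalCLM' p q (g s)) leb01 :=
    (evalCLM' p q).integrable_comp hg
  refine ae_eq_of_forall_setIntegral_eq_of_sigmaFinite
    (fun A hA _ => hint1.integrableOn) (fun A hA _ => (w_integrable p q).integrableOn)
    (fun A hA _ => ?_)
  set A' : Set ℝ := A ∩ Set.Icc 0 1 with hA'def
  have hA' : MeasurableSet A' := hA.inter measurableSet_Icc
  have hA'1 : A' ⊆ Set.Icc (0:ℝ) 1 := Set.inter_subset_right
  have hre := leb01_restrict_inter' hA
  calc ∫ s in A, evalCLM' p q (g s) ∂leb01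
      = ∫ s in A', evalCLM' p q (g s) ∂leb01 := by
        rw [show leb01.restrict A = leb01.restrict A' from hre]
    _ = evalCLM' p q (∫ s in A', g s ∂leb01) :=
        ContinuousLinearMap.integral_comp_comm _ hg.integrableOn
    _ = ∫ t in Set.Icc p q, (⇑(∫ s in A', g s ∂leb01)) t ∂leb01 := rfl
    _ = ∫ t in Set.Icc p q, (volume (A' ∩ Set.Icc 0 t)).toReal ∂leb01 :=
        integral_congr_ae (ae_restrict_of_ae (hrep A' hA' hA'1))
    _ = ∫ s in A', (volume (Set.Icc p q ∩ Set.Ici s)).toReal ∂leb01 :=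
        key_real' hA' hA'1 hp hq
    _ = ∫ s in A, (volume (Set.Icc p q ∩ Set.Ici s)).toReal ∂leb01 := by
        rw [show leb01.restrict A = leb01.restrict A' from hre]

end BochnerAuxNS



/-- There is no Bochner-integrable function `g : [0,1] → L∞[0,1]` whose Bochner
integral over every Borel set `A ⊆ [0,1]` is the element of `L∞[0,1]` represented by
`t ↦ μ(A ∩ [0,t])`. -/
theorem no_bochner_antiderivative :
    ¬ ∃ g : ℝ → Lp ℝ ⊤ leb01, Integrable g leb01 ∧
        ∀ A : Set ℝ, MeasurableSet A → A ⊆ Set.Icc (0:ℝ) 1 →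
          ⇑(∫ s in A, g s ∂leb01) =ᵐ[leb01]
            fun t => (volume (A ∩ Set.Icc (0:ℝ) t)).toReal := by

  rintro ⟨g, hg, hrep⟩
  -- a.e. identification of all rational evaluations
  have hQ : ∀ᵐ s ∂leb01, ∀ r r' : ℚ, 0 ≤ r → (r':ℝ) ≤ 1 →
      evalCLM' r r' (g s) = (volume (Set.Icc (r:ℝ) r' ∩ Set.Ici s)).toReal := by
    rw [ae_all_iff]; intro r; rw [ae_all_iff]; intro r'
    by_cases h1 : (0:ℚ) ≤ r
    · by_cases h2 : (r':ℝ) ≤ 1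
      · filter_upwards [ae_eval g hg hrep (show (0:ℝ) ≤ (r:ℝ) by exact_mod_cast h1) h2] with s hs
        exact fun _ _ => hs
      · exact ae_of_all _ fun s _ h2' => absurd h2' h2
    · exact ae_of_all _ fun s h1' _ => absurd h1' h1
  obtain ⟨f', hf'm, hgf'⟩ := hg.aestronglyMeasurable
  obtain ⟨c, hc_count, hc_sub⟩ := hf'm.isSeparable_range
  have hIoo : ∀ᵐ s ∂leb01, s ∈ Set.Ioo (0:ℝ) 1 := by
    rw [ae_iff]
    have : {s : ℝ | ¬ s ∈ Set.Ioo (0:ℝ) 1} = (Set.Ioo (0:ℝ) 1)ᶜ := rfl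
    rw [this, Measure.restrict_apply (measurableSet_Ioo.compl)]
    refine measure_mono_null (fun x hx => ?_) (?_ : volume ({0, 1} : Set ℝ) = 0)
    · obtain ⟨hx1, hx2⟩ := hx
      simp only [Set.mem_compl_iff, Set.mem_Ioo, not_and_or, not_lt] at hx1
      rcases hx1 with h | h
      · exact Or.inl (le_antisymm h hx2.1)
      · exact Or.inr (Set.mem_singleton_iff.mpr (le_antisymm hx2.2 h))
    · exact (Set.toFinite _).measure_zero _
  set S : Set ℝ := {s | ((∀ r r' : ℚ, 0 ≤ r → (r':ℝ) ≤ 1 →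
      evalCLM' r r' (g s) = (volume (Set.Icc (r:ℝ) r' ∩ Set.Ici s)).toReal)
      ∧ g s = f' s) ∧ s ∈ Set.Ioo (0:ℝ) 1} with hSdef
  have hS : ∀ᵐ s ∂leb01, s ∈ S := (hQ.and hgf').and hIoo
  -- separation of values of g on S
  have hsepval : ∀ s ∈ S, ∀ s' ∈ S, s ≠ s' → 1 ≤ ‖g s - g s'‖ := by
    have key : ∀ s ∈ S, ∀ s' ∈ S, s < s' → 1 ≤ ‖g s - g s'‖ := by
      rintro s ⟨⟨hsQ, _⟩, hs0, hs1⟩ s' ⟨⟨hs'Q, _⟩, hs'0, hs'1⟩ hss'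
      obtain ⟨r, hr1, hr2⟩ := exists_rat_btwn hss'
      obtain ⟨r', hr'1, hr'2⟩ := exists_rat_btwn hr2
      have hrr' : (r:ℝ) < r' := hr'1
      have h0r : (0:ℚ) ≤ r := by exact_mod_cast le_of_lt (lt_trans hs0 hr1)
      have hr'le : (r':ℝ) ≤ 1 := le_of_lt (lt_trans hr'2 hs'1)
      have hsub : Set.Icc (r:ℝ) r' ∩ Set.Ici s = Set.Icc (r:ℝ) r' :=
        Set.inter_eq_left.mpr (fun x hx => le_trans hr1.le hx.1)
      have hvs : evalCLM' r r' (g s) = (r':ℝ) - r := by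
        rw [hsQ r r' h0r hr'le, hsub, Real.volume_Icc, ENNReal.toReal_ofReal (by linarith)]
      have hvs' : evalCLM' r r' (g s') = 0 := by
        rw [hs'Q r r' h0r hr'le,
          show Set.Icc (r:ℝ) r' ∩ Set.Ici s' = ∅ from Set.eq_empty_iff_forall_notMem.mpr
            (fun x ⟨hx1, hx2⟩ => absurd (le_trans hx2 hx1.2) (not_le.mpr hr'2)),
          measure_empty, ENNReal.toReal_zero]
      have hb := evalCLM'_bound r r' (g s - g s')
      rw [map_sub, hvs, hvs'] at hb
      have hleb : (leb01 (Set.Icc (r:ℝ) r')).toReal = (r':ℝ) - r := by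
        rw [Measure.restrict_apply measurableSet_Icc,
          Set.inter_eq_left.mpr (Set.Icc_subset_Icc (by linarith) hr'le),
          Real.volume_Icc, ENNReal.toReal_ofReal (by linarith)]
      rw [hleb, sub_zero, Real.norm_of_nonneg (by linarith)] at hb
      nlinarith [norm_nonneg (g s - g s')]
    intro s hs s' hs' hne
    rcases lt_trichotomy s s' with h | h | h
    · exact key s hs s' hs' h
    · exact absurd h hne
    · rw [norm_sub_rev]; exact key s' hs' s hs h
  -- S injects into the countable set c
  have hmem : ∀ s ∈ S, ∃ x ∈ c, dist (g s) x < 1/2 := by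
    rintro s ⟨⟨_, hgs⟩, _⟩
    exact Metric.mem_closure_iff.mp (hc_sub (hgs ▸ Set.mem_range_self s)) _ (by norm_num)
  choose! d hd1 hd2 using hmem
  have hinj : Set.InjOn d S := by
    intro s hs s' hs' hdd
    by_contra hne
    have h1 := hsepval s hs s' hs' hne
    have : dist (g s) (g s') < 1 := by
      calc dist (g s) (g s') ≤ dist (g s) (d s) + dist (d s') (g s') := by
            rw [hdd]; exact dist_triangle _ _ _
        _ < 1 := by
            have := hd2 s hs; have := hd2 s' hs'
            rw [dist_comm (d s') (g s')]; linarith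
    rw [dist_eq_norm] at this; linarith
  have hScount : S.Countable := Set.MapsTo.countable_of_injOn hd1 hinj hc_count
  have hS0 : leb01 S = 0 := hScount.measure_zero _
  have hSc0 : leb01 Sᶜ = 0 := hS
  have huniv : leb01 Set.univ ≤ leb01 S + leb01 Sᶜ := by
    rw [← Set.union_compl_self S]; exact measure_union_le _ _
  rw [hS0, hSc0, Measure.restrict_apply_univ, Real.volume_Icc] at huniv
  simp at huniv
end

section
/- Let ℓ₂([0,1]) be the Hilbert space of real functions x on [0,1] with Σ_{t∈[0,1]} |x(t)|² < ∞, with norm ‖x‖ = (Σ_{t∈[0,1]} |x(t)|²)^{1/2}, and let e_t = χ_{{t}} be its standard unit vectors. Define f : [0,1] → ℓ₂([0,1]) by f(t) = e_t. Then f is Riemann integrable with Riemann integral 0, but f is not Bochner-integrable with respect to Lebesgue measure on [0,1]; in particular, f is not almost everywhere equal to any strongly measurable (i.e. almost separably valued measurable) function. -/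
open MeasureTheory Set Pointwise

/-- The function `f : [0,1] → ℓ₂([0,1])`, `f t = e_t` (extended by `0` outside `[0,1]`). -/
noncomputable def ortFn2 (t : ℝ) : lp (fun _ : ↥(Set.Icc (0:ℝ) 1) => ℝ) 2 :=
  if h : t ∈ Set.Icc (0:ℝ) 1 then lp.single 2 (⟨t, h⟩ : ↥(Set.Icc (0:ℝ) 1)) 1 else 0

lemma ortFn2_inner {s t : ℝ} (hs : s ∈ Set.Icc (0:ℝ) 1) (ht : t ∈ Set.Icc (0:ℝ) 1) :
    (inner ℝ (ortFn2 s) (ortFn2 t) : ℝ) = if s = t then 1 else 0 := by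
  classical
  rw [ortFn2, ortFn2, dif_pos hs, dif_pos ht, lp.inner_single_left]
  by_cases h : s = t
  · subst h
    simp [lp.single_apply_self]
  · rw [lp.single_apply_ne 2 _ _ (by simpa [Subtype.ext_iff, eq_comm] using h)]
    simp [h]

lemma ortFn2_riemann : HasRiemannIntegral ortFn2 0 := by
  classical
  intro ε hε
  refine ⟨ε ^ 2 / 4, by positivity, ?_⟩
  intro n a t ha0 han hmono hlen ht
  set δ : ℝ := ε ^ 2 / 4 with hδ
  have hmon : ∀ i j, i ≤ j → j ≤ n → a i ≤ a j := by
    intro i j hij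
    induction j, hij using Nat.le_induction with
    | base => intro _; exact le_refl _
    | succ j hij ih =>
      intro hj
      exact le_trans (ih (by omega)) (hmono j (by omega))
  have htI : ∀ i < n, t i ∈ Set.Icc (0:ℝ) 1 := by
    intro i hi
    constructor
    · calc (0:ℝ) = a 0 := ha0.symm
        _ ≤ a i := hmon 0 i (Nat.zero_le _) (le_of_lt hi)
        _ ≤ t i := (ht i hi).1
    · calc t i ≤ a (i+1) := (ht i hi).2
        _ ≤ a n := hmon (i+1) n hi le_rfl
        _ = 1 := han
  set c : ℕ → ℝ := fun i => a (i + 1) - a i with hc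
  set x := ∑ i ∈ Finset.range n, c i • ortFn2 (t i) with hx
  -- inner expansion
  have hxx : (inner ℝ x x : ℝ) = ∑ i ∈ Finset.range n, c i *
      ∑ j ∈ Finset.range n, c j * (if t i = t j then 1 else 0) := by
    rw [hx, sum_inner]
    refine Finset.sum_congr rfl fun i hi => ?_
    rw [real_inner_smul_left, inner_sum]
    refine congrArg (fun z => c i * z) (Finset.sum_congr rfl fun j hj => ?_)
    rw [real_inner_smul_right,
      ortFn2_inner (htI i (Finset.mem_range.1 hi)) (htI j (Finset.mem_range.1 hj))]
  -- bound the inner sum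
  have hkey : ∀ i ∈ Finset.range n,
      (∑ j ∈ Finset.range n, c j * (if t i = t j then 1 else 0)) ≤ 2 * δ := by
    intro i hi
    have hi' : i < n := Finset.mem_range.1 hi
    set S := (Finset.range n).filter (fun j => t i = t j) with hS
    have hSne : S.Nonempty := ⟨i, by simp [hS, hi']⟩
    set m := S.min' hSne with hm
    set M := S.max' hSne with hM
    have hmS : m ∈ S := S.min'_mem hSne
    have hMS : M ∈ S := S.max'_mem hSne
    have hmn : m < n := Finset.mem_range.1 (Finset.mem_filter.1 hmS).1
    have hMn : M < n := Finset.mem_range.1 (Finset.mem_filter.1 hMS).1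
    have htm : t i = t m := (Finset.mem_filter.1 hmS).2
    have htM : t i = t M := (Finset.mem_filter.1 hMS).2
    have step1 : (∑ j ∈ Finset.range n, c j * (if t i = t j then 1 else 0))
        = ∑ j ∈ S, c j := by
      rw [hS, Finset.sum_filter]
      refine Finset.sum_congr rfl fun j _ => ?_
      split_ifs <;> simp
    have hsub : S ⊆ Finset.Icc m M := by
      intro j hj
      exact Finset.mem_Icc.2 ⟨S.min'_le j hj, S.le_max' j hj⟩
    have step2 : (∑ j ∈ S, c j) ≤ ∑ j ∈ Finset.Icc m M, c j := by
      refine Finset.sum_le_sum_of_subset_of_nonneg hsub fun j hjIcc _ => ?_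
      have : j < n := lt_of_le_of_lt (Finset.mem_Icc.1 hjIcc).2 hMn
      exact sub_nonneg.2 (hmono j this)
    have hmM : m ≤ M := S.min'_le M hMS
    have step3 : (∑ j ∈ Finset.Icc m M, c j) = a (M + 1) - a m := by
      rw [← Finset.Ico_add_one_right_eq_Icc, Finset.sum_Ico_eq_sub _ (by omega),
        Finset.sum_range_sub (fun k => a k), Finset.sum_range_sub (fun k => a k)]
      ring
    have h1 : a (M + 1) ≤ t M + δ := by
      have := hlen M hMn
      have := (ht M hMn).1
      linarith
    have h2 : t m - δ ≤ a m := by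
      have := hlen m hmn
      have := (ht m hmn).2
      linarith
    calc (∑ j ∈ Finset.range n, c j * (if t i = t j then 1 else 0))
        = ∑ j ∈ S, c j := step1
      _ ≤ ∑ j ∈ Finset.Icc m M, c j := step2
      _ = a (M + 1) - a m := step3
      _ ≤ (t M + δ) - (t m - δ) := by linarith
      _ = 2 * δ := by rw [← htm, ← htM]; ring
  have hcsum : (∑ i ∈ Finset.range n, c i) = 1 := by
    rw [hc, Finset.sum_range_sub (fun k => a k), ha0, han, sub_zero]
  have hbound : (inner ℝ x x : ℝ) ≤ 2 * δ := by
    rw [hxx]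
    calc (∑ i ∈ Finset.range n, c i *
        ∑ j ∈ Finset.range n, c j * (if t i = t j then 1 else 0))
        ≤ ∑ i ∈ Finset.range n, c i * (2 * δ) := by
          refine Finset.sum_le_sum fun i hi => ?_
          have hci : 0 ≤ c i := sub_nonneg.2 (hmono i (Finset.mem_range.1 hi))
          exact mul_le_mul_of_nonneg_left (hkey i hi) hci
      _ = (∑ i ∈ Finset.range n, c i) * (2 * δ) := by rw [Finset.sum_mul]
      _ = 2 * δ := by rw [hcsum, one_mul]
  have hnorm2 : ‖x‖ ^ 2 ≤ 2 * δ := by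
    rw [← real_inner_self_eq_norm_sq]; exact hbound
  have : ‖x‖ ^ 2 < ε ^ 2 := by
    rw [hδ] at hnorm2; nlinarith
  have hlt : ‖x‖ < ε := lt_of_pow_lt_pow_left₀ 2 (le_of_lt hε) this
  simpa [hx, sub_zero] using hlt


lemma ortFn2_dist {s t : ℝ} (hs : s ∈ Set.Icc (0:ℝ) 1) (ht : t ∈ Set.Icc (0:ℝ) 1)
    (hst : s ≠ t) : ‖ortFn2 s - ortFn2 t‖ ^ 2 = 2 := by
  rw [← real_inner_self_eq_norm_sq, inner_sub_sub_self,
    ortFn2_inner hs hs, ortFn2_inner hs ht, ortFn2_inner ht hs, ortFn2_inner ht ht]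
  simp [hst, hst.symm]
  norm_num

lemma ortFn2_not_ae :
    ¬ ∃ g : ℝ → lp (fun _ : ↥(Set.Icc (0:ℝ) 1) => ℝ) 2,
        StronglyMeasurable g ∧ ortFn2 =ᵐ[volume.restrict (Set.Icc (0:ℝ) 1)] g := by
  rintro ⟨g, hg, hfg⟩
  set μr := volume.restrict (Set.Icc (0:ℝ) 1) with hμr
  obtain ⟨c, hcc, hcd⟩ := hg.isSeparable_range
  set E := {t | ortFn2 t = g t} ∩ Set.Icc (0:ℝ) 1 with hE
  have hEc : E.Countable := by
    have hcover : E ⊆ ⋃ y ∈ c, {t ∈ E | dist (g t) y < 1/2} := by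
      intro t htE
      have hgt : g t ∈ closure c := hcd ⟨t, rfl⟩
      obtain ⟨y, hyc, hy⟩ := Metric.mem_closure_iff.1 hgt (1/2) (by norm_num)
      exact Set.mem_biUnion hyc ⟨htE, hy⟩
    refine Set.Countable.mono hcover (Set.Countable.biUnion hcc fun y _ => ?_)
    refine Set.Subsingleton.countable ?_
    rintro s ⟨⟨hsg, hsI⟩, hsd⟩ t ⟨⟨htg, htI⟩, htd⟩
    by_contra hst
    have hd2 : ‖ortFn2 s - ortFn2 t‖ ^ 2 = 2 := ortFn2_dist hsI htI hst
    have : dist (g s) (g t) < 1 := by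
      calc dist (g s) (g t) ≤ dist (g s) y + dist y (g t) := dist_triangle _ _ _
        _ < 1/2 + 1/2 := by rw [dist_comm y (g t)]; exact add_lt_add hsd htd
        _ = 1 := by norm_num
    rw [← hsg, ← htg, dist_eq_norm] at this
    nlinarith [norm_nonneg (ortFn2 s - ortFn2 t)]
  have hE0 : volume E = 0 := hEc.measure_zero _
  have hne : μr {t | ¬ ortFn2 t = g t} = 0 := ae_iff.1 hfg
  have huniv : μr Set.univ = 1 := by
    rw [hμr, Measure.restrict_apply_univ, Real.volume_Icc]
    norm_num
  have hsplit : (1 : ENNReal) ≤ μr {t | ortFn2 t = g t} := by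
    have : μr Set.univ ≤ μr {t | ortFn2 t = g t} + μr {t | ¬ ortFn2 t = g t} := by
      refine le_trans (measure_mono ?_) (measure_union_le _ _)
      intro t _
      by_cases h : ortFn2 t = g t
      · exact Or.inl h
      · exact Or.inr h
    rw [huniv, hne, add_zero] at this
    exact this
  have : μr {t | ortFn2 t = g t} = volume E := by
    rw [hμr, Measure.restrict_apply' measurableSet_Icc, hE]
  rw [this, hE0] at hsplit
  simp at hsplit


/-- The function `t ↦ e_t : [0,1] → ℓ₂([0,1])` is Riemann integrable with
Riemann integral `0`, but is not Bochner-integrable w.r.t. Lebesgue measure on `[0,1]`;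
in particular it is not a.e. equal to any strongly measurable function. -/
theorem ortFn2_riemann_not_bochner :
    HasRiemannIntegral ortFn2 0 ∧
    ¬ Integrable ortFn2 (volume.restrict (Set.Icc (0:ℝ) 1)) ∧
    ¬ ∃ g : ℝ → lp (fun _ : ↥(Set.Icc (0:ℝ) 1) => ℝ) 2,
        StronglyMeasurable g ∧ ortFn2 =ᵐ[volume.restrict (Set.Icc (0:ℝ) 1)] g := by
  refine ⟨ortFn2_riemann, fun h => ortFn2_not_ae h.aestronglyMeasurable, ortFn2_not_ae⟩
end

section
/- Let ℓ₁([0,1]) be the Banach space of real functions x on [0,1] with Σ_{t∈[0,1]} |x(t)| < ∞, with norm ‖x‖ = Σ_{t∈[0,1]} |x(t)|, and let e_t = χ_{{t}} be its standard unit vectors. Let μ be Lebesgue measure on [0,1] and define f : [0,1] → ℓ₁([0,1]) by f(t) = e_t. Then the limit set I(f) is empty. -/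
open MeasureTheory Set Pointwise

/-- The function `f : [0,1] → ℓ₁([0,1])`, `f t = e_t` (extended by `0` outside `[0,1]`). -/
noncomputable def ortFn1 (t : ℝ) : lp (fun _ : ↥(Set.Icc (0:ℝ) 1) => ℝ) 1 :=
  if h : t ∈ Set.Icc (0:ℝ) 1 then lp.single 1 (⟨t, h⟩ : ↥(Set.Icc (0:ℝ) 1)) 1 else 0

open scoped ENNReal NNReal

namespace OrtAux


abbrev Idx := ↥(Set.Icc (0:ℝ) 1)

lemma sabs (z : lp (fun _ : Idx => ℝ) 1) : Summable fun t => |z t| := by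
  have h1 : ((1:ℝ≥0∞)).toReal = 1 := rfl
  have := (lp.memℓp z).summable (p := 1) (by rw [h1]; norm_num)
  simpa [h1] using this

lemma norm_eq (z : lp (fun _ : Idx => ℝ) 1) : ‖z‖ = ∑' t, |z t| := by
  have h1 : ((1:ℝ≥0∞)).toReal = 1 := rfl
  have := lp.norm_eq_tsum_rpow (p := 1) (by rw [h1]; norm_num) z
  simpa [h1] using this

lemma smulabs {s : Idx → ℝ} (hs : ∀ t, |s t| ≤ 1) (z : lp (fun _ : Idx => ℝ) 1) :
    Summable fun t => |s t| * |z t| := by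
  refine Summable.of_norm_bounded (sabs z) fun t => ?_
  rw [Real.norm_eq_abs, abs_mul, abs_abs, abs_abs]
  exact mul_le_of_le_one_left (abs_nonneg _) (hs t)

lemma smul {s : Idx → ℝ} (hs : ∀ t, |s t| ≤ 1) (z : lp (fun _ : Idx => ℝ) 1) :
    Summable fun t => s t * z t := by
  refine Summable.of_norm_bounded (sabs z) fun t => ?_
  rw [Real.norm_eq_abs, abs_mul]
  exact mul_le_of_le_one_left (abs_nonneg _) (hs t)

lemma pairing_bound {s : Idx → ℝ} (hs : ∀ t, |s t| ≤ 1) (z : lp (fun _ : Idx => ℝ) 1) :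
    |∑' t, s t * z t| ≤ ‖z‖ := by
  rw [norm_eq z]
  calc |∑' t, s t * z t| ≤ ∑' t, |s t| * |z t| := by
        have h := norm_tsum_le_tsum_norm (f := fun t : Idx => s t * (z t : ℝ)) (by
          simpa [Real.norm_eq_abs, abs_mul] using smulabs hs z)
        simpa [Real.norm_eq_abs, abs_mul] using h
    _ ≤ ∑' t, |z t| :=
        Summable.tsum_le_tsum (fun t => mul_le_of_le_one_left (abs_nonneg _) (hs t))
          (smulabs hs z) (sabs z)

noncomputable def pairing (s : Idx → ℝ) (hs : ∀ t, |s t| ≤ 1) :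
    lp (fun _ : Idx => ℝ) 1 →L[ℝ] ℝ :=
  LinearMap.mkContinuous
    { toFun := fun z => ∑' t, s t * z t
      map_add' := by
        intro z w
        show (∑' t, s t * (z + w) t) = (∑' t, s t * z t) + ∑' t, s t * w t
        have h : (fun t => s t * (z + w) t) = fun t => s t * z t + s t * w t := by
          funext t
          rw [lp.coeFn_add, Pi.add_apply, mul_add]
        rw [h]
        exact Summable.tsum_add (smul hs z) (smul hs w)
      map_smul' := by
        intro c z
        show (∑' t, s t * (c • z) t) = c * ∑' t, s t * z t
        have h : (fun t => s t * (c • z) t) = fun t => c * (s t * z t) := by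
          funext t
          rw [lp.coeFn_smul, Pi.smul_apply, smul_eq_mul]; ring
        rw [h, tsum_mul_left] }
    1
    (fun z => by
      show ‖∑' t, s t * z t‖ ≤ 1 * ‖z‖
      rw [Real.norm_eq_abs, one_mul]
      exact pairing_bound hs z)

lemma pairing_apply (s : Idx → ℝ) (hs : ∀ t, |s t| ≤ 1) (z : lp (fun _ : Idx => ℝ) 1) :
    pairing s hs z = ∑' t, s t * z t := rfl

lemma pairing_norm_le (s : Idx → ℝ) (hs : ∀ t, |s t| ≤ 1) (z : lp (fun _ : Idx => ℝ) 1) :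
    |pairing s hs z| ≤ ‖z‖ := by
  rw [pairing_apply]; exact pairing_bound hs z

lemma pairing_single (s : Idx → ℝ) (hs : ∀ t, |s t| ≤ 1) (a : Idx) :
    pairing s hs (lp.single 1 a 1) = s a := by
  rw [pairing_apply, tsum_eq_single a]
  · rw [lp.single_apply_self, mul_one]
  · intro b hb
    rw [lp.single_apply_ne _ _ _ hb, mul_zero]


end OrtAux

/-- For the function `f(t) = e_t : [0,1] → ℓ₁([0,1])` (w.r.t. Lebesgue measure
on `[0,1]`), the limit set `I(f)` is empty. -/
theorem ortFn1_limitSet_empty :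
    RLLimitSet (volume.restrict (Set.Icc (0:ℝ) 1)) ortFn1 = ∅ := by
  rw [Set.eq_empty_iff_forall_notMem]
  intro x hx
  set μ := volume.restrict (Set.Icc (0:ℝ) 1) with hμdef
  -- choose a finite set D capturing most of the mass of x
  obtain ⟨D, hD⟩ : ∃ D : Finset OrtAux.Idx,
      (∑' t : {a : OrtAux.Idx // a ∉ D}, |x t|) < 4⁻¹ := by
    have h := tendsto_tsum_compl_atTop_zero (f := fun t : OrtAux.Idx => |x t|)
    exact ((tendsto_order.1 h).2 _ (by norm_num : (0:ℝ) < 4⁻¹)).exists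
  -- the sign vector
  set s : OrtAux.Idx → ℝ :=
    fun t => if t ∈ D then (if 0 ≤ x t then -1 else 1) else 1 with hsdef
  have hs : ∀ t, |s t| ≤ 1 := by
    intro t
    simp only [hsdef]
    split_ifs <;> norm_num
  -- the finite exceptional set in ℝ
  set D' : Set ℝ := (fun a : OrtAux.Idx => (a : ℝ)) '' ↑D with hD'def
  have hD'fin : D'.Finite := D.finite_toSet.image _
  have hD'meas : MeasurableSet D' := hD'fin.measurableSet
  have hD'null : volume D' = 0 := hD'fin.measure_zero _
  -- the partition
  set P : ℕ → Set ℝ := fun n =>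
    if n = 0 then Set.Icc (0:ℝ) 1 \ D'
    else if n = 1 then (Set.Icc (0:ℝ) 1 \ D')ᶜ else (∅ : Set ℝ) with hPdef
  have hPmeas : ∀ i, MeasurableSet (P i) := by
    intro i
    simp only [hPdef]
    split_ifs
    · exact measurableSet_Icc.diff hD'meas
    · exact (measurableSet_Icc.diff hD'meas).compl
    · exact MeasurableSet.empty
  have hP : IsRLPartition Set.univ P := by
    refine ⟨hPmeas, ?_, ?_⟩
    · intro i j hij
      have key : ∀ a b : ℕ, a ≠ b → a < b → Disjoint (P a) (P b) := by
        intro a b hab hlt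
        match a, b with
        | 0, 1 => simpa [hPdef] using disjoint_compl_right
        | 0, (n+2) => simp [hPdef]
        | 1, (n+2) => simp [hPdef]
        | (m+2), b => simp [hPdef]
      rcases lt_or_gt_of_ne hij with h | h
      · exact key i j hij h
      · exact (key j i (Ne.symm hij) h).symm
    · apply Set.eq_univ_of_forall
      intro t
      by_cases ht : t ∈ Set.Icc (0:ℝ) 1 \ D'
      · exact Set.mem_iUnion.2 ⟨0, by simpa [hPdef] using ht⟩
      · exact Set.mem_iUnion.2 ⟨1, by simpa [hPdef] using ht⟩
  obtain ⟨Γ, hΓ, hfiner, T, hsamp, habs, hclose⟩ := hx 4⁻¹ (by norm_num) P hP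
  -- measure computations
  have hμuniv : μ Set.univ = 1 := by
    rw [hμdef, Measure.restrict_apply_univ, Real.volume_Icc]
    norm_num
  have hsumENN : (∑' j, μ (Γ j)) = 1 := by
    rw [← measure_iUnion hΓ.2.1 hΓ.1, hΓ.2.2, hμuniv]
  have hfin : ∀ j, μ (Γ j) ≠ ∞ := by
    intro j
    have h1 : μ (Γ j) ≤ μ Set.univ := measure_mono (Set.subset_univ _)
    rw [hμuniv] at h1
    exact ne_top_of_le_ne_top ENNReal.one_ne_top h1
  have hcsum : Summable fun j => (μ (Γ j)).toReal :=
    ENNReal.summable_toReal (by rw [hsumENN]; exact ENNReal.one_ne_top)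
  have hctsum : (∑' j, (μ (Γ j)).toReal) = 1 := by
    rw [← ENNReal.tsum_toReal_eq hfin, hsumENN, ENNReal.toReal_one]
  -- sampling points of non-null pieces avoid D' and lie in [0,1]
  have hTj : ∀ j, 0 < (μ (Γ j)).toReal → T j ∈ Set.Icc (0:ℝ) 1 \ D' := by
    intro j hj
    have hμj : μ (Γ j) ≠ 0 := by
      intro h
      rw [h] at hj
      simp at hj
    have hne : (Γ j).Nonempty := nonempty_of_measure_ne_zero hμj
    have hT := hsamp j hne
    obtain ⟨i, hsub⟩ := hfiner j
    have hi : i = 0 := by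
      by_contra h0
      apply hμj
      rw [hμdef, Measure.restrict_apply (hΓ.1 j)]
      refine measure_mono_null ?_ hD'null
      rintro t ⟨ht1, ht2⟩
      have hmem := hsub ht1
      by_cases hi1 : i = 1
      · rw [hi1] at hmem
        have hmem' : t ∉ Set.Icc (0:ℝ) 1 \ D' := by simpa [hPdef] using hmem
        by_contra hD'c
        exact hmem' ⟨ht2, hD'c⟩
      · simp [hPdef, h0, hi1] at hmem
    rw [hi] at hsub
    have := hsub hT
    simpa [hPdef] using this
  -- the functional
  set Φ := OrtAux.pairing s hs with hΦdef
  -- summability in lp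
  have hsummlp : Summable fun j => (μ (Γ j)).toReal • ortFn1 (T j) := by
    refine Summable.of_norm ?_
    have heq : (fun j => ‖(μ (Γ j)).toReal • ortFn1 (T j)‖)
        = fun j => (μ (Γ j)).toReal * ‖ortFn1 (T j)‖ := by
      funext j
      rw [norm_smul, Real.norm_eq_abs, abs_of_nonneg ENNReal.toReal_nonneg]
    rw [heq]
    exact habs
  -- Φ applied to the RL sum is 1
  have hΦS : Φ (RLSum μ ortFn1 Γ T) = 1 := by
    have hcongr : (∑' j, Φ ((μ (Γ j)).toReal • ortFn1 (T j)))
        = ∑' j, (μ (Γ j)).toReal := by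
      apply tsum_congr
      intro j
      rcases eq_or_lt_of_le (ENNReal.toReal_nonneg : 0 ≤ (μ (Γ j)).toReal) with h | h
      · rw [← h]
        simp
      · rw [_root_.map_smul, smul_eq_mul]
        have hmem := hTj j h
        have hof : ortFn1 (T j) = lp.single 1 (⟨T j, hmem.1⟩ : OrtAux.Idx) 1 := by
          rw [ortFn1, dif_pos hmem.1]
        rw [hof, hΦdef, OrtAux.pairing_single]
        have hnotD : (⟨T j, hmem.1⟩ : OrtAux.Idx) ∉ D := by
          intro hmemD
          exact hmem.2 ⟨_, hmemD, rfl⟩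
        simp [hsdef, hnotD]
    rw [RLSum, Φ.map_tsum hsummlp, hcongr, hctsum]
  -- Φ applied to x is small
  have hΦx : Φ x ≤ 4⁻¹ := by
    have hsx : Summable fun t => s t * x t := OrtAux.smul hs x
    have hsplit := Summable.sum_add_tsum_subtype_compl hsx D
    rw [hΦdef, OrtAux.pairing_apply, ← hsplit]
    have h1 : (∑ t ∈ D, s t * x t) ≤ 0 := by
      apply Finset.sum_nonpos
      intro t ht
      simp only [hsdef, if_pos ht]
      split_ifs with h
      · nlinarith
      · push_neg at h
        nlinarith
    have hsub1 : Summable fun t : {a : OrtAux.Idx // a ∉ D} => s ↑t * x ↑t :=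
      hsx.comp_injective Subtype.coe_injective
    have hsub2 : Summable fun t : {a : OrtAux.Idx // a ∉ D} => |x ↑t| :=
      (OrtAux.sabs x).comp_injective Subtype.coe_injective
    have h2 : (∑' t : {a : OrtAux.Idx // a ∉ D}, s ↑t * x ↑t)
        ≤ ∑' t : {a : OrtAux.Idx // a ∉ D}, |x ↑t| := by
      refine Summable.tsum_le_tsum (fun t => ?_) hsub1 hsub2
      refine (le_abs_self _).trans ?_
      rw [abs_mul]
      exact mul_le_of_le_one_left (abs_nonneg _) (hs _)
    linarith
  -- contradiction
  have hb := OrtAux.pairing_norm_le s hs (RLSum μ ortFn1 Γ T - x)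
  rw [← hΦdef, map_sub, hΦS] at hb
  have hle : (1 : ℝ) - Φ x ≤ |1 - Φ x| := le_abs_self _
  linarith
end
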